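/- For 0 < ν < 1, the difference (1 + 8 Σ_{t=1}^{∞} ν^{2t}/(1+ν^{2t})²) − 8 Σ_{t=0}^{∞} ν^{2t+1}/(1+ν^{2t+1})² equals Γ(ν) := 1 + 8 Σ_{k=1}^{∞} (-1)^k k ν^k/(1+ν^k). -/

import Mathlib

set_option maxHeartbeats 1000000

open Real

/-- `∑ m (-1)^m (m+1) x^(m+1) = x/(1+x)^2` for `|x| < 1`. -/
lemma aux_hasSum1 {x : ℝ} (hx : |x| < 1) :
    HasSum (fun m : ℕ => (-1 : ℝ) ^ m * (m + 1) * x ^ (m + 1)) (x / (1 + x) ^ 2) := by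
  have h : HasSum (fun n : ℕ => (n : ℝ) * (-x) ^ n) ((-x) / (1 - (-x)) ^ 2) :=
    hasSum_coe_mul_geometric_of_norm_lt_one (by simpa [abs_neg] using hx)
  have h1 : HasSum (fun n : ℕ => ((n : ℝ) + 1) * (-x) ^ (n + 1)) ((-x) / (1 - (-x)) ^ 2) := by
    have := (hasSum_nat_add_iff' (f := fun n : ℕ => (n : ℝ) * (-x) ^ n) 1).mpr h
    simpa using this
  have h2 : HasSum (fun n : ℕ => -((-1 : ℝ) ^ n * (n + 1) * x ^ (n + 1)))
      ((-x) / (1 - (-x)) ^ 2) := by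
    convert h1 using 2 with n
    rw [neg_pow]
    ring
  have h3 := h2.neg
  simp only [neg_neg] at h3
  convert h3 using 1
  · rfl
  rw [sub_neg_eq_add, neg_div, neg_neg]

/-- `∑ n (-1)^n y^(n+1) = y/(1+y)` for `|y| < 1`. -/
lemma aux_hasSum2 {y : ℝ} (hy : |y| < 1) :
    HasSum (fun n : ℕ => (-1 : ℝ) ^ n * y ^ (n + 1)) (y / (1 + y)) := by
  have h : HasSum (fun n : ℕ => (-y) ^ n) (1 - (-y))⁻¹ :=
    hasSum_geometric_of_norm_lt_one (by simpa [abs_neg] using hy)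
  have h1 := h.mul_left y
  have h2 : HasSum (fun n : ℕ => (-1 : ℝ) ^ n * y ^ (n + 1)) (y * (1 - -y)⁻¹) := by
    convert h1 using 2 with n
    · rfl
    rw [neg_pow]
    ring
  convert h2 using 1
  rw [sub_neg_eq_add, div_eq_mul_inv, mul_comm]

theorem Lbar_diff_eq_Gamma (ν : ℝ) (hν : 0 < ν) (hν1 : ν < 1) :
    (1 + 8 * ∑' t : ℕ, ν ^ (2 * t + 2) / (1 + ν ^ (2 * t + 2)) ^ 2)
      - 8 * ∑' t : ℕ, ν ^ (2 * t + 1) / (1 + ν ^ (2 * t + 1)) ^ 2 =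
    1 + 8 * ∑' k : ℕ, (-1 : ℝ) ^ (k + 1) * (k + 1) * ν ^ (k + 1) / (1 + ν ^ (k + 1)) := by
  have hν0 : (0:ℝ) ≤ ν := hν.le
  have habs : ∀ n : ℕ, |ν ^ (n + 1)| < 1 := by
    intro n
    rw [abs_of_nonneg (pow_nonneg hν0 _)]
    exact pow_lt_one₀ hν0 hν1 (Nat.succ_ne_zero n)
  have hpos : ∀ n : ℕ, (0:ℝ) < 1 + ν ^ (n + 1) := fun n => by positivity
  have hgeom : Summable (fun n : ℕ => ν ^ (n + 1)) := by
    simpa [pow_succ] using (summable_geometric_of_lt_one hν0 hν1).mul_right ν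
  -- the double-indexed function
  set F : ℕ × ℕ → ℝ := fun p =>
    (-1 : ℝ) ^ (p.1 + p.2) * (p.2 + 1) * ν ^ ((p.1 + 1) * (p.2 + 1)) with hF
  -- summability of F
  have hFsum : Summable F := by
    apply Summable.of_abs
    have hg : Summable (fun m : ℕ => ((m:ℝ) + 1) * ν ^ m) := by
      have h1 : Summable (fun m : ℕ => (m:ℝ) * ν ^ m) := by
        have := summable_pow_mul_geometric_of_norm_lt_one (R := ℝ) 1
          (r := ν) (by rwa [Real.norm_eq_abs, abs_of_nonneg hν0])
        simpa using this
      have h2 : Summable (fun m : ℕ => ν ^ m) :=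
        summable_geometric_of_lt_one hν0 hν1
      simpa [add_mul] using h1.add h2
    have hprod : Summable (fun p : ℕ × ℕ => (ν ^ (p.1 + 1)) * (((p.2:ℝ) + 1) * ν ^ p.2)) :=
      Summable.mul_of_nonneg hgeom hg (fun n => by positivity) (fun m => by positivity)
    apply hprod.of_nonneg_of_le (fun p => abs_nonneg _)
    rintro ⟨n, m⟩
    have : |F (n, m)| = ((m:ℝ) + 1) * ν ^ ((n + 1) * (m + 1)) := by
      rw [hF, abs_mul, abs_mul, abs_pow, abs_neg, abs_one, one_pow, one_mul,
        abs_of_nonneg (by positivity : (0:ℝ) ≤ (m:ℝ) + 1),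
        abs_of_nonneg (pow_nonneg hν0 _)]
    rw [this]
    have hle : ν ^ ((n + 1) * (m + 1)) ≤ ν ^ (n + 1 + m) := by
      apply pow_le_pow_of_le_one hν0 hν1.le
      nlinarith [Nat.zero_le n, Nat.zero_le m]
    calc ((m:ℝ) + 1) * ν ^ ((n + 1) * (m + 1)) ≤ ((m:ℝ) + 1) * ν ^ (n + 1 + m) :=
          mul_le_mul_of_nonneg_left hle (by positivity)
      _ = ν ^ (n + 1) * (((m:ℝ) + 1) * ν ^ m) := by rw [pow_add]; ring
  -- inner sums over m (second coordinate)
  have hinner1 : ∀ n : ℕ, HasSum (fun m => F (n, m))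
      ((-1 : ℝ) ^ n * (ν ^ (n + 1) / (1 + ν ^ (n + 1)) ^ 2)) := by
    intro n
    have := (aux_hasSum1 (habs n)).mul_left ((-1 : ℝ) ^ n)
    convert this using 2 with m
    · rfl
    rw [hF]
    simp only [pow_add, mul_pow, ← pow_mul]
    ring_nf
  -- inner sums over n (first coordinate)
  have hinner2 : ∀ m : ℕ, HasSum (fun n => F (n, m))
      ((-1 : ℝ) ^ m * ((m:ℝ) + 1) * (ν ^ (m + 1) / (1 + ν ^ (m + 1)))) := by
    intro m
    have := (aux_hasSum2 (habs m)).mul_left ((-1 : ℝ) ^ m * ((m:ℝ) + 1))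
    convert this using 2 with n
    · rfl
    rw [hF]
    simp only [pow_add, mul_pow, ← pow_mul]
    ring_nf
  -- swap
  have hswap : ∑' n : ℕ, ∑' m : ℕ, F (n, m) = ∑' m : ℕ, ∑' n : ℕ, F (n, m) :=
    (Summable.tsum_comm (f := fun n m => F (n, m)) (by exact hFsum)).symm
  -- define G
  set G : ℕ → ℝ := fun k => (-1 : ℝ) ^ (k + 1) * (ν ^ (k + 1) / (1 + ν ^ (k + 1)) ^ 2) with hG
  have hGval : ∀ k, G k = -∑' m : ℕ, F (k, m) := by
    intro k
    rw [(hinner1 k).tsum_eq, hG, pow_succ]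
    ring
  have hGsum : Summable G := by
    apply Summable.of_abs
    apply hgeom.of_nonneg_of_le (fun k => abs_nonneg _)
    intro k
    have h1 : (0:ℝ) < (1 + ν ^ (k + 1)) ^ 2 := by positivity
    have h2 : (1:ℝ) ≤ (1 + ν ^ (k + 1)) ^ 2 := by nlinarith [pow_nonneg hν0 (k+1)]
    rw [hG]
    rw [abs_mul, abs_pow, abs_neg, abs_one, one_pow, one_mul,
      abs_of_nonneg (by positivity : (0:ℝ) ≤ ν ^ (k + 1) / (1 + ν ^ (k + 1)) ^ 2)]
    rw [div_le_iff₀ h1]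
    nlinarith [pow_nonneg hν0 (k+1)]
  -- key identity: ∑ G = RHS sum
  have hkey : ∑' k : ℕ, G k
      = ∑' k : ℕ, (-1 : ℝ) ^ (k + 1) * ((k:ℝ) + 1) * ν ^ (k + 1) / (1 + ν ^ (k + 1)) := by
    have h1 : ∑' k : ℕ, G k = -∑' n : ℕ, ∑' m : ℕ, F (n, m) := by
      rw [← tsum_neg]
      exact tsum_congr hGval
    rw [h1, hswap, ← tsum_neg]
    apply tsum_congr
    intro m
    rw [(hinner2 m).tsum_eq, pow_succ]
    ring
  -- even/odd split of G
  have hGe : ∀ t : ℕ, G (2 * t + 1) = ν ^ (2 * t + 2) / (1 + ν ^ (2 * t + 2)) ^ 2 := by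
    intro t
    simp only [hG]
    have h1 : (-1 : ℝ) ^ (2 * t + 1 + 1) = 1 := by
      rw [show 2 * t + 1 + 1 = 2 * (t + 1) by ring, pow_mul]; norm_num
    rw [h1, one_mul]
  have hGo : ∀ t : ℕ, G (2 * t) = -(ν ^ (2 * t + 1) / (1 + ν ^ (2 * t + 1)) ^ 2) := by
    intro t
    simp only [hG]
    have h1 : (-1 : ℝ) ^ (2 * t + 1) = -1 := by
      rw [pow_succ, pow_mul]; norm_num
    rw [show 2 * t + 0 + 1 = 2 * t + 1 from rfl, h1]
    ring
  have hsplit : (∑' t : ℕ, G (2 * t)) + ∑' t : ℕ, G (2 * t + 1) = ∑' k, G k :=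
    tsum_even_add_odd (hGsum.comp_injective fun a b h => by omega)
      (hGsum.comp_injective fun a b h => by omega)
  have he : ∑' t : ℕ, G (2 * t + 1) = ∑' t : ℕ, ν ^ (2 * t + 2) / (1 + ν ^ (2 * t + 2)) ^ 2 :=
    tsum_congr hGe
  have ho : ∑' t : ℕ, G (2 * t) = -∑' t : ℕ, ν ^ (2 * t + 1) / (1 + ν ^ (2 * t + 1)) ^ 2 := by
    rw [← tsum_neg]; exact tsum_congr hGo
  have : (∑' t : ℕ, ν ^ (2 * t + 2) / (1 + ν ^ (2 * t + 2)) ^ 2)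
      - ∑' t : ℕ, ν ^ (2 * t + 1) / (1 + ν ^ (2 * t + 1)) ^ 2 = ∑' k, G k := by
    rw [← hsplit, he, ho]; ring
  calc (1 + 8 * ∑' t : ℕ, ν ^ (2 * t + 2) / (1 + ν ^ (2 * t + 2)) ^ 2)
      - 8 * ∑' t : ℕ, ν ^ (2 * t + 1) / (1 + ν ^ (2 * t + 1)) ^ 2
      = 1 + 8 * ((∑' t : ℕ, ν ^ (2 * t + 2) / (1 + ν ^ (2 * t + 2)) ^ 2)
          - ∑' t : ℕ, ν ^ (2 * t + 1) / (1 + ν ^ (2 * t + 1)) ^ 2) := by ring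
    _ = 1 + 8 * ∑' k, G k := by rw [this]
    _ = 1 + 8 * ∑' k : ℕ, (-1 : ℝ) ^ (k + 1) * (k + 1) * ν ^ (k + 1) / (1 + ν ^ (k + 1)) := by
        rw [hkey]
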